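/- Let P be a stationary distribution over a finite alphabet V with block entropy H(n), and suppose the limit lim_{n→∞} H(n)/n exists. Let C be a code that is weakly minimax universal for P. Then the expected excess code length satisfies E^C(n) ≥ E(n) for infinitely many n, where E(n) = 2H(n) − H(2n) and E^C(n) = 2H^C(n) − H^C(2n). -/

import Mathlib

/-- A stationary distribution over the finite alphabet `V`: an assignment of
probabilities to all finite nonempty strings over `V`, consistent under
left and right extension. -/
structure StationaryDist (V : Type*) [Fintype V] where
  P : List V → ℝ
  nonneg : ∀ v : List V, v ≠ [] → 0 ≤ P v
  le_one : ∀ v : List V, v ≠ [] → P v ≤ 1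
  sum_single : ∑ a : V, P [a] = 1
  sum_cons : ∀ v : List V, v ≠ [] → ∑ a : V, P (a :: v) = P v
  sum_snoc : ∀ v : List V, v ≠ [] → ∑ a : V, P (v ++ [a]) = P v

/-- Block entropy `H(n)` of a stationary distribution: the entropy (in bits)
of the strings of length `n`, with `H(0) = 0`.  (Note `Real.logb 2 0 = 0`,
which realizes the convention `0 · log₂ 0 = 0`.) -/
noncomputable def blockH {V : Type*} [Fintype V] (P : StationaryDist V) (n : ℕ) : ℝ :=
  if n = 0 then 0
  else -∑ v : Fin n → V, P.P (List.ofFn v) * Real.logb 2 (P.P (List.ofFn v))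

/-- Expected length `H^C(n)` of the code `C` on the strings of length `n`. -/
noncomputable def codeH {V : Type*} [Fintype V] (P : StationaryDist V)
    (C : List V → List Bool) (n : ℕ) : ℝ :=
  if n = 0 then 0
  else ∑ v : Fin n → V, P.P (List.ofFn v) * ((C (List.ofFn v)).length : ℝ)

/-- Let `P` be a stationary distribution with block entropy `H(n)` such that
`lim H(n)/n` exists (`= h`), and let `C` be a weakly minimax universal code
for `P`, i.e. `H^C(n) ≥ H(n)` for all `n ≥ 1` and `lim H^C(n)/n = h`.
Then `E^C(n) ≥ E(n)` for infinitely many `n`, where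
`E(n) = 2H(n) − H(2n)` and `E^C(n) = 2H^C(n) − H^C(2n)`. -/
theorem excess_code_length_ge_excess_entropy_infinitely_often
    {V : Type*} [Fintype V] (P : StationaryDist V)
    (C : List V → List Bool) (hC : ∀ v : List V, v ≠ [] → C v ≠ [])
    (h : ℝ)
    (hlimH : Filter.Tendsto (fun n : ℕ => blockH P n / n) Filter.atTop (nhds h))
    (huniv_ge : ∀ n : ℕ, 1 ≤ n → blockH P n ≤ codeH P C n)
    (huniv_lim : Filter.Tendsto (fun n : ℕ => codeH P C n / n) Filter.atTop (nhds h)) :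
    {n : ℕ | 1 ≤ n ∧
      2 * blockH P n - blockH P (2 * n)
        ≤ 2 * codeH P C n - codeH P C (2 * n)}.Infinite := by
  classical
  by_contra hfin
  rw [Set.not_infinite] at hfin
  obtain ⟨N, hN⟩ := hfin.bddAbove
  set D : ℕ → ℝ := fun n => codeH P C n - blockH P n with hDdef
  have hD0 : ∀ n, 1 ≤ n → 0 ≤ D n := fun n hn => sub_nonneg.2 (huniv_ge n hn)
  set M : ℕ := N + 1 with hMdef
  have hM1 : 1 ≤ M := Nat.le_add_left 1 N
  have key : ∀ n, M ≤ n → 2 * D n < D (2 * n) := by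
    intro n hn
    have h1 : 1 ≤ n := le_trans hM1 hn
    have hnot : n ∉ {n : ℕ | 1 ≤ n ∧
        2 * blockH P n - blockH P (2 * n)
          ≤ 2 * codeH P C n - codeH P C (2 * n)} := by
      intro hmem
      have := hN hmem
      omega
    simp only [Set.mem_setOf_eq, not_and, not_le] at hnot
    have := hnot h1
    simp only [hDdef]
    linarith
  have hpos : 0 < D (2 * M) := lt_of_le_of_lt
    (by linarith [hD0 M hM1]) (key M le_rfl)
  have grow : ∀ k : ℕ, D (2 * M) * 2 ^ k ≤ D (2 ^ (k + 1) * M) := by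
    intro k
    induction k with
    | zero => simp
    | succ k ih =>
      have hge : M ≤ 2 ^ (k + 1) * M :=
        Nat.le_mul_of_pos_left M (by positivity)
      have hkey := key (2 ^ (k + 1) * M) hge
      have heq : 2 * (2 ^ (k + 1) * M) = 2 ^ (k + 1 + 1) * M := by ring
      rw [heq] at hkey
      calc D (2 * M) * 2 ^ (k + 1) = 2 * (D (2 * M) * 2 ^ k) := by ring
        _ ≤ 2 * D (2 ^ (k + 1) * M) := by linarith
        _ ≤ D (2 ^ (k + 1 + 1) * M) := le_of_lt hkey
  -- D n / n → 0
  have hlim0 : Filter.Tendsto (fun n : ℕ => D n / n) Filter.atTop (nhds 0) := by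
    have := huniv_lim.sub hlimH
    rw [sub_self] at this
    simpa [hDdef, sub_div] using this
  set f : ℕ → ℕ := fun k => 2 ^ (k + 1) * M with hfdef
  have hf : Filter.Tendsto f Filter.atTop Filter.atTop := by
    apply Filter.tendsto_atTop_mono (f := fun k : ℕ => k)
    · intro k
      have h1 : k + 1 ≤ 2 ^ (k + 1) := Nat.le_of_lt (Nat.lt_two_pow_self (n := k + 1))
      calc k ≤ k + 1 := Nat.le_succ k
        _ ≤ 2 ^ (k + 1) := h1
        _ ≤ 2 ^ (k + 1) * M := Nat.le_mul_of_pos_right _ hM1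
    · exact Filter.tendsto_id
  have hcomp : Filter.Tendsto (fun k => D (f k) / (f k)) Filter.atTop (nhds 0) :=
    hlim0.comp hf
  have hc : 0 < D (2 * M) / (2 * M) := by
    apply div_pos hpos
    positivity
  have hlb : ∀ k : ℕ, D (2 * M) / (2 * M) ≤ D (f k) / (f k) := by
    intro k
    have h1 : (f k : ℝ) = 2 ^ k * (2 * M) := by
      simp only [hfdef]
      push_cast
      ring
    have h2 : (0 : ℝ) < 2 * M := by positivity
    have h3 : (0 : ℝ) < 2 ^ k := by positivity
    rw [h1, div_le_div_iff₀ h2 (by positivity)]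
    have := grow k
    calc D (2 * M) * (2 ^ k * (2 * M)) = D (2 * M) * 2 ^ k * (2 * M) := by ring
      _ ≤ D (2 ^ (k + 1) * M) * (2 * M) := by nlinarith
      _ = D (f k) * (2 * M) := by rfl
  have hev : ∀ᶠ k in Filter.atTop, D (f k) / (f k) < D (2 * M) / (2 * M) :=
    hcomp.eventually_lt_const hc
  obtain ⟨k, hk⟩ := hev.exists
  exact absurd (hlb k) (not_le.2 hk)
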